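/- For 2×2 matrices S₁, S₂ with quaternion entries, det((S₁S₂)(S₂†S₁†)) = det(S₁S₁†)·det(S₂S₂†), where S† is the conjugate transpose and det of a Hermitian quaternionic 2×2 matrix [[a, b],[conj(b), d]] (a,d real) is defined as ad − b·conj(b). -/

import Mathlib

open Matrix Quaternion

set_option maxHeartbeats 1000000
noncomputable section

/-- The determinant of a Hermitian quaternionic `2×2` matrix `[[a,b],[conj b,d]]`
(`a`, `d` real): `det = a·d − b·conj b`. -/
def hdet (X : Matrix (Fin 2) (Fin 2) (Quaternion ℝ)) : Quaternion ℝ :=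
  X 0 0 * X 1 1 - X 0 1 * star (X 0 1)

/-- The complex 2×2 representation of a quaternion. -/
def phiFun (q : Quaternion ℝ) : Matrix (Fin 2) (Fin 2) ℂ :=
  !![⟨q.re, q.imI⟩, ⟨q.imJ, q.imK⟩; ⟨-q.imJ, q.imK⟩, ⟨q.re, -q.imI⟩]

def phi : Quaternion ℝ →+* Matrix (Fin 2) (Fin 2) ℂ where
  toFun := phiFun
  map_one' := by
    ext i j; fin_cases i <;> fin_cases j <;>
      simp [phiFun, Matrix.one_apply, Complex.ext_iff]
  map_mul' x y := by
    ext i j; fin_cases i <;> fin_cases j <;> apply Complex.ext <;>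
      simp [phiFun, Matrix.mul_apply, Fin.sum_univ_two] <;> ring
  map_zero' := by
    ext i j; fin_cases i <;> fin_cases j <;> simp [phiFun, Complex.ext_iff]
  map_add' x y := by
    ext i j; fin_cases i <;> fin_cases j <;> simp [phiFun, Complex.ext_iff] <;> ring

lemma phi_star (q : Quaternion ℝ) : phi (star q) = (phi q)ᴴ := by
  ext i j; fin_cases i <;> fin_cases j <;>
    simp [phi, phiFun, conjTranspose_apply, Complex.ext_iff]

/-- The complex 4×4 representation of a 2×2 quaternionic matrix. -/
noncomputable def Phi : Matrix (Fin 2) (Fin 2) (Quaternion ℝ) →+*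
    Matrix (Fin 2 × Fin 2) (Fin 2 × Fin 2) ℂ :=
  (Matrix.compRingEquiv (Fin 2) (Fin 2) ℂ).toRingHom.comp phi.mapMatrix

lemma Phi_apply (S : Matrix (Fin 2) (Fin 2) (Quaternion ℝ)) (i j k l : Fin 2) :
    Phi S (i, k) (j, l) = phi (S i j) k l := rfl

lemma Phi_apply' (S : Matrix (Fin 2) (Fin 2) (Quaternion ℝ)) (p q : Fin 2 × Fin 2) :
    Phi S p q = phi (S p.1 q.1) p.2 q.2 := rfl

lemma Phi_conjTranspose (S : Matrix (Fin 2) (Fin 2) (Quaternion ℝ)) :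
    Phi Sᴴ = (Phi S)ᴴ := by
  ext ⟨i, k⟩ ⟨j, l⟩
  have h := phi_star (S j i)
  have := congrFun (congrFun h k) l
  simpa [Phi_apply, conjTranspose_apply] using this

/-- The real number equal to the `hdet` of a Hermitian quaternionic matrix. -/
def rdet (T : Matrix (Fin 2) (Fin 2) (Quaternion ℝ)) : ℝ :=
  (T 0 0).re * (T 1 1).re - normSq (T 0 1)

lemma herm_decomp {T : Matrix (Fin 2) (Fin 2) (Quaternion ℝ)} (h : T.IsHermitian) :
    T = !![(((T 0 0).re : ℝ) : Quaternion ℝ), T 0 1;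
           star (T 0 1), (((T 1 1).re : ℝ) : Quaternion ℝ)] := by
  have h00 : T 0 0 = ((T 0 0).re : Quaternion ℝ) := Quaternion.star_eq_self.mp (h.apply 0 0)
  have h11 : T 1 1 = ((T 1 1).re : Quaternion ℝ) := Quaternion.star_eq_self.mp (h.apply 1 1)
  have h10 : star (T 0 1) = T 1 0 := h.apply 1 0
  refine Matrix.ext fun i j => ?_
  fin_cases i <;> fin_cases j <;>
    simp [← h00, ← h11, ← h10]

lemma hdet_herm {T : Matrix (Fin 2) (Fin 2) (Quaternion ℝ)} (h : T.IsHermitian) :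
    T 0 0 * T 1 1 - T 0 1 * star (T 0 1) = ((rdet T : ℝ) : Quaternion ℝ) := by
  have h00 : T 0 0 = ((T 0 0).re : Quaternion ℝ) := Quaternion.star_eq_self.mp (h.apply 0 0)
  have h11 : T 1 1 = ((T 1 1).re : Quaternion ℝ) := Quaternion.star_eq_self.mp (h.apply 1 1)
  rw [rdet, h00, h11, Quaternion.self_mul_star]
  simp only [Quaternion.re_coe]
  push_cast
  ring

def e4 : Fin 4 ≃ Fin 2 × Fin 2 where
  toFun := ![(0, 0), (0, 1), (1, 0), (1, 1)]
  invFun p := ![![0, 1], ![2, 3]] p.1 p.2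
  left_inv := by decide
  right_inv := by decide

lemma det4 (a b c d e f g h i j k l m n o p : ℂ) :
    Matrix.det !![a,b,c,d; e,f,g,h; i,j,k,l; m,n,o,p] =
      a*(f*(k*p-l*o) - g*(j*p-l*n) + h*(j*o-k*n))
      - b*(e*(k*p-l*o) - g*(i*p-l*m) + h*(i*o-k*m))
      + c*(e*(j*p-l*n) - f*(i*p-l*m) + h*(i*n-j*m))
      - d*(e*(j*o-k*n) - f*(i*o-k*m) + g*(i*n-j*m)) := by
  simp [Matrix.det_succ_row_zero, Fin.sum_univ_succ, Fin.succAbove, Fin.castSucc, Fin.castAdd,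
    Fin.castLE]
  ring

lemma det_Phi_herm (a d : ℝ) (b : Quaternion ℝ) :
    Matrix.det (Phi !![((a : ℝ) : Quaternion ℝ), b;
        star b, ((d : ℝ) : Quaternion ℝ)]) = (((a * d - normSq b : ℝ)) : ℂ) ^ 2 := by
  rw [← Matrix.det_submatrix_equiv_self e4]
  have hA : (Phi !![((a : ℝ) : Quaternion ℝ), b;
        star b, ((d : ℝ) : Quaternion ℝ)]).submatrix e4 e4 =
      !![⟨a,0⟩, 0, ⟨b.re,b.imI⟩, ⟨b.imJ,b.imK⟩;
         0, ⟨a,0⟩, ⟨-b.imJ,b.imK⟩, ⟨b.re,-b.imI⟩;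
         ⟨b.re,-b.imI⟩, ⟨-b.imJ,-b.imK⟩, ⟨d,0⟩, 0;
         ⟨b.imJ,-b.imK⟩, ⟨b.re,b.imI⟩, 0, ⟨d,0⟩] := by
    refine Matrix.ext fun i j => ?_
    fin_cases i <;> fin_cases j <;>
      simp [e4, Phi_apply', phi, phiFun, Complex.ext_iff]
  rw [hA, det4, sq]
  apply Complex.ext <;>
    simp [normSq_def', Complex.mul_re, Complex.mul_im, ← Complex.ofReal_pow] <;> ring

lemma det_Phi_of_herm {T : Matrix (Fin 2) (Fin 2) (Quaternion ℝ)} (h : T.IsHermitian) :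
    Matrix.det (Phi T) = (((rdet T : ℝ)) : ℂ) ^ 2 := by
  conv_lhs => rw [herm_decomp h]
  rw [det_Phi_herm, rdet]

lemma rdet_nonneg (S : Matrix (Fin 2) (Fin 2) (Quaternion ℝ)) :
    0 ≤ rdet (S * Sᴴ) := by
  have h00 : ((S * Sᴴ) 0 0) = ((normSq (S 0 0) + normSq (S 0 1) : ℝ) : Quaternion ℝ) := by
    simp [Matrix.mul_apply, Fin.sum_univ_two, conjTranspose_apply, Quaternion.self_mul_star]
  have h11 : ((S * Sᴴ) 1 1) = ((normSq (S 1 0) + normSq (S 1 1) : ℝ) : Quaternion ℝ) := by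
    simp [Matrix.mul_apply, Fin.sum_univ_two, conjTranspose_apply, Quaternion.self_mul_star]
  have h01 : ((S * Sᴴ) 0 1) = S 0 0 * star (S 1 0) + S 0 1 * star (S 1 1) := by
    simp [Matrix.mul_apply, Fin.sum_univ_two, conjTranspose_apply]
  rw [rdet, h00, h11, h01, Quaternion.re_coe, Quaternion.re_coe]
  set x := S 0 0 * star (S 1 0)
  set y := S 0 1 * star (S 1 1)
  have hxy : normSq (x + y) ≤ (‖x‖ + ‖y‖) ^ 2 := by
    rw [normSq_eq_norm_mul_self, ← sq]
    have := norm_add_le x y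
    nlinarith [norm_nonneg (x + y), norm_nonneg x, norm_nonneg y]
  have hx : ‖x‖ = ‖S 0 0‖ * ‖S 1 0‖ := by rw [norm_mul, norm_star]
  have hy : ‖y‖ = ‖S 0 1‖ * ‖S 1 1‖ := by rw [norm_mul, norm_star]
  have n00 : normSq (S 0 0) = ‖S 0 0‖ * ‖S 0 0‖ := normSq_eq_norm_mul_self _
  have n01 : normSq (S 0 1) = ‖S 0 1‖ * ‖S 0 1‖ := normSq_eq_norm_mul_self _
  have n10 : normSq (S 1 0) = ‖S 1 0‖ * ‖S 1 0‖ := normSq_eq_norm_mul_self _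
  have n11 : normSq (S 1 1) = ‖S 1 1‖ * ‖S 1 1‖ := normSq_eq_norm_mul_self _
  rw [hx, hy] at hxy
  rw [n00, n01, n10, n11]
  nlinarith [hxy, sq_nonneg (‖S 0 0‖ * ‖S 1 1‖ - ‖S 0 1‖ * ‖S 1 0‖),
    norm_nonneg (S 0 0), norm_nonneg (S 0 1), norm_nonneg (S 1 0), norm_nonneg (S 1 1)]

/-- For `2×2` quaternionic matrices `S₁, S₂`:
`det((S₁S₂)(S₂†S₁†)) = det(S₁S₁†)·det(S₂S₂†)`. -/
theorem hdet_mul (S₁ S₂ : Matrix (Fin 2) (Fin 2) (Quaternion ℝ)) :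
    hdet ((S₁ * S₂) * (S₂ᴴ * S₁ᴴ)) = hdet (S₁ * S₁ᴴ) * hdet (S₂ * S₂ᴴ) := by
  have e : S₂ᴴ * S₁ᴴ = (S₁ * S₂)ᴴ := (conjTranspose_mul S₁ S₂).symm
  rw [e]
  have h₃ := isHermitian_mul_conjTranspose_self (S₁ * S₂)
  have h₁ := isHermitian_mul_conjTranspose_self S₁
  have h₂ := isHermitian_mul_conjTranspose_self S₂
  show hdet _ = hdet _ * hdet _
  rw [hdet, hdet, hdet, hdet_herm h₃, hdet_herm h₁, hdet_herm h₂, ← Quaternion.coe_mul]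
  congr 1
  -- real identity
  have key : ∀ S : Matrix (Fin 2) (Fin 2) (Quaternion ℝ),
      ((rdet (S * Sᴴ) : ℝ) : ℂ) ^ 2 = Matrix.det (Phi S) * star (Matrix.det (Phi S)) := by
    intro S
    rw [← det_Phi_of_herm (isHermitian_mul_conjTranspose_self S), _root_.map_mul,
      Matrix.det_mul, Phi_conjTranspose, Matrix.det_conjTranspose]
  have hsq : ((rdet ((S₁ * S₂) * (S₁ * S₂)ᴴ) : ℝ) : ℂ) ^ 2
      = ((rdet (S₁ * S₁ᴴ) * rdet (S₂ * S₂ᴴ) : ℝ) : ℂ) ^ 2 := by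
    rw [key (S₁ * S₂)]
    push_cast
    rw [mul_pow, key S₁, key S₂, _root_.map_mul, Matrix.det_mul]
    rw [star_mul']
    ring
  have hsq' : (rdet ((S₁ * S₂) * (S₁ * S₂)ᴴ)) ^ 2
      = (rdet (S₁ * S₁ᴴ) * rdet (S₂ * S₂ᴴ)) ^ 2 := by exact_mod_cast hsq
  have h3 := rdet_nonneg (S₁ * S₂)
  have ha := rdet_nonneg S₁
  have hb := rdet_nonneg S₂
  nlinarith [hsq', mul_nonneg ha hb]
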